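/- Let g: ℝⁿ → ℝ be convex and differentiable, x ∈ ℝⁿ, M > 0, η ≥ 2M, and set x⁺⁺ := x - (1/η)∇g(x). If g(x⁺⁺) - g(x) - ⟨∇g(x), x⁺⁺ - x⟩ ≤ (M/2)‖x⁺⁺ - x‖², then ‖∇g(x)‖ ≤ √2 · η · ‖x - x*‖, where x* is any minimizer of g. -/

import Mathlib

open scoped RealInnerProductSpace

lemma grad_ineq'' {n : ℕ} (g : EuclideanSpace ℝ (Fin n) → ℝ)
    (hg : ConvexOn ℝ Set.univ g) (hdiff : Differentiable ℝ g)
    (x y : EuclideanSpace ℝ (Fin n)) :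
    g x + ⟪gradient g x, y - x⟫ ≤ g y := by
  set φ : ℝ → ℝ := fun t => g (x + t • (y - x)) with hφ
  have hconv : ConvexOn ℝ Set.univ φ := by
    have := hg.comp_affineMap (AffineMap.lineMap x y)
    convert this using 1
    · rfl
    · rfl
    · rfl
    · rfl
    · rfl
    funext t
    show g (x + t • (y - x)) = g (AffineMap.lineMap x y t)
    rw [AffineMap.lineMap_apply_module]
    congr 1
    module
  have hF : HasFDerivAt g (InnerProductSpace.toDual ℝ _ (gradient g x)) x :=
    hasGradientAt_iff_hasFDerivAt.mp (hdiff x).hasGradientAt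
  have hline : HasDerivAt (fun t : ℝ => x + t • (y - x)) (y - x) 0 := by
    simpa using ((hasDerivAt_id (0:ℝ)).smul_const (y - x)).const_add x
  have hd : HasDerivAt φ ⟪gradient g x, y - x⟫ 0 := by
    have hF' : HasFDerivAt g (InnerProductSpace.toDual ℝ _ (gradient g x)) (x + (0:ℝ) • (y - x)) := by
      simpa using hF
    have := (hF'.comp_hasDerivAt (x := (0:ℝ)) hline)
    simp only [Function.comp_def, InnerProductSpace.toDual_apply_apply] at this
    exact this
  have := hconv.le_slope_of_hasDerivAt (Set.mem_univ (0:ℝ)) (Set.mem_univ (1:ℝ))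
    one_pos hd
  have hs : slope φ 0 1 = g y - g x := by simp [slope, φ]
  rw [hs] at this
  linarith

theorem stmt_6 {n : ℕ} (g : EuclideanSpace ℝ (Fin n) → ℝ)
    (hg : ConvexOn ℝ Set.univ g) (hdiff : Differentiable ℝ g)
    (x xstar : EuclideanSpace ℝ (Fin n))
    (M η : ℝ) (hM : 0 < M) (hη : η ≥ 2 * M)
    (xpp : EuclideanSpace ℝ (Fin n)) (hxpp : xpp = x - (1 / η) • gradient g x)
    (hdesc : g xpp - g x - ⟪gradient g x, xpp - x⟫ ≤ M / 2 * ‖xpp - x‖ ^ 2)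
    (hmin : ∀ y, g xstar ≤ g y) :
    ‖gradient g x‖ ≤ Real.sqrt 2 * η * ‖x - xstar‖ := by
  have hη0 : 0 < η := by linarith
  set G := gradient g x with hG
  set N := ‖G‖ with hN
  set R := ‖x - xstar‖ with hR
  have hN0 : 0 ≤ N := norm_nonneg _
  have hR0 : 0 ≤ R := norm_nonneg _
  have hdvec : xpp - x = (-(1/η)) • G := by
    rw [hxpp]; module
  have hinner : ⟪G, xpp - x⟫ = -(1/η) * N ^ 2 := by
    rw [hdvec, real_inner_smul_right, real_inner_self_eq_norm_sq]
  have hnorm : ‖xpp - x‖ ^ 2 = (1/η)^2 * N ^ 2 := by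
    rw [hdvec, norm_smul]
    rw [Real.norm_eq_abs, abs_neg, abs_of_pos (by positivity : (0:ℝ) < 1/η)]
    ring
  rw [hinner, hnorm] at hdesc
  have hconv := grad_ineq'' g hg hdiff x xstar
  have hCS : ⟪G, x - xstar⟫ ≤ N * R := real_inner_le_norm G (x - xstar)
  have hflip : ⟪G, xstar - x⟫ = -⟪G, x - xstar⟫ := by
    rw [← inner_neg_right]; norm_num
  have hmin' := hmin xpp
  -- (1/η - M/(2η²)) N² ≤ N R
  have key : 3 / (4*η) * N ^ 2 ≤ N * R := by
    have h1 : 1/η * N^2 - M/2 * (1/η)^2 * N^2 ≤ N * R := by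
      rw [hflip] at hconv
      nlinarith
    have h2 : 1/η - M/2*(1/η)^2 - 3/(4*η) = (η - 2*M)/(4*η^2) := by
      field_simp
      ring
    have h3 : (0:ℝ) ≤ (η - 2*M)/(4*η^2) := by
      apply div_nonneg (by linarith) (by positivity)
    nlinarith [sq_nonneg N]
  rcases eq_or_lt_of_le hN0 with h0 | h0
  · rw [← h0]
    positivity
  · clear hdesc hconv hCS hflip hmin' hinner hnorm hdvec hxpp hmin hg hdiff hη hM
    have hkey2 : 3 * N^2 ≤ 4 * η * (N * R) := by
      rw [div_mul_eq_mul_div, div_le_iff₀ (by positivity)] at key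
      nlinarith
    clear key
    have h43 : 3 * N ≤ 4 * η * R := by
      have h' : N * (3 * N) ≤ N * (4 * η * R) := by nlinarith
      exact le_of_mul_le_mul_left h' h0
    have hsqrt : (4:ℝ)/3 ≤ Real.sqrt 2 := by
      nlinarith [Real.sq_sqrt (by norm_num : (0:ℝ) ≤ 2), Real.sqrt_nonneg 2]
    have : (0:ℝ) ≤ (Real.sqrt 2 - 4/3) * η * R := by
      apply mul_nonneg (mul_nonneg (by linarith) hη0.le) hR0
    nlinarith
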